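/- For every q-ary DMC W (q = 2^r, r ≥ 2): Z_max^{(r−1)}(W⁻) ≤ (q/2)·Z_max^{(r)}(W) + (q/2)·Z_max^{(r−1)}(W). -/

import Mathlib

open Finset

instance (r : ℕ) : NeZero (2 ^ r) := ⟨pow_ne_zero r two_ne_zero⟩

/-- The Bhattacharyya parameter `Z(W; x, x') = ∑_y √(W x y · W x' y)` of a pair of inputs. -/
noncomputable def bhat {q : ℕ} {Y : Type*} [Fintype Y] (W : ZMod q → Y → ℝ) (x x' : ZMod q) : ℝ :=
  ∑ y, Real.sqrt (W x y * W x' y)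

/-- `Z_v(W) = (1/q) ∑_x Z(W; x, x+v)`. -/
noncomputable def Zv {q : ℕ} [NeZero q] {Y : Type*} [Fintype Y] (W : ZMod q → Y → ℝ) (v : ZMod q) : ℝ :=
  (1 / (q : ℝ)) * ∑ x, bhat W x (x + v)

/-- `W` is a discrete memoryless channel: nonnegative entries and rows summing to one. -/
def IsDMC {q : ℕ} {Y : Type*} [Fintype Y] (W : ZMod q → Y → ℝ) : Prop :=
  (∀ x y, 0 ≤ W x y) ∧ ∀ x, ∑ y, W x y = 1

/-- The ordered weight `wt(v) = r - ν₂(v̄)` of `v : ZMod (2^r)`. -/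
def owt (r : ℕ) {q : ℕ} (v : ZMod q) : ℕ := r - padicValNat 2 v.val

/-- The `i`-th average Bhattacharyya distance `Z_i(W) = 2^{-(i-1)} ∑_{v ∈ X_i} Z_v(W)`. -/
noncomputable def Zi (r : ℕ) {Y : Type*} [Fintype Y] (W : ZMod (2 ^ r) → Y → ℝ) (i : ℕ) : ℝ :=
  (1 / 2 ^ (i - 1) : ℝ) *
    ∑ v ∈ univ.filter (fun v : ZMod (2 ^ r) => v ≠ 0 ∧ owt r v = i), Zv W v

/-- The symmetric capacity `I(W)` (with `0 log 0 = 0`). -/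
noncomputable def symCap {q : ℕ} [NeZero q] {Y : Type*} [Fintype Y] (W : ZMod q → Y → ℝ) : ℝ :=
  ∑ x, ∑ y, (1 / (q : ℝ)) * W x y *
    Real.logb 2 (W x y / ∑ x', (1 / (q : ℝ)) * W x' y)

/-- `Z_max^{(j)}(W) = max_{v ∈ X_j} Z_v(W)` (as a supremum over the finite nonempty class `X_j`). -/
noncomputable def Zmax (r : ℕ) {Y : Type*} [Fintype Y] (W : ZMod (2 ^ r) → Y → ℝ) (j : ℕ) : ℝ :=
  ⨆ v : {v : ZMod (2 ^ r) // v ≠ 0 ∧ owt r v = j}, Zv W v.1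

/-- The Arıkan minus transform `W⁻ u₁ (y₁,y₂) = (1/q) ∑_{u₂} W (u₁+u₂) y₁ · W u₂ y₂`. -/
noncomputable def Wminus {q : ℕ} [NeZero q] {Y : Type*} [Fintype Y] (W : ZMod q → Y → ℝ) :
    ZMod q → Y × Y → ℝ :=
  fun u₁ p => (1 / (q : ℝ)) * ∑ u₂, W (u₁ + u₂) p.1 * W u₂ p.2

/-- The Arıkan plus transform `W⁺ u₂ (y₁,y₂,u₁) = (1/q) W (u₁+u₂) y₁ · W u₂ y₂`. -/
noncomputable def Wplus {q : ℕ} [NeZero q] {Y : Type*} [Fintype Y] (W : ZMod q → Y → ℝ) :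
    ZMod q → Y × Y × ZMod q → ℝ :=
  fun u₂ p => (1 / (q : ℝ)) * W (p.2.2 + u₂) p.1 * W u₂ p.2.1

/-- The restricted channel `W^{[r-k]}` for the `r-k` least significant bits. -/
noncomputable def Wres (r k : ℕ) {Y : Type*} [Fintype Y] (W : ZMod (2 ^ r) → Y → ℝ) :
    ZMod (2 ^ (r - k)) → Y → ℝ :=
  fun u y => (1 / 2 ^ k : ℝ) *
    ∑ x ∈ univ.filter (fun x : ZMod (2 ^ r) => x.val % 2 ^ (r - k) = u.val), W x y


section AuxZmax5

open Finset

lemma sqrt_add_le' {a b : ℝ} (ha : 0 ≤ a) (hb : 0 ≤ b) :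
    Real.sqrt (a + b) ≤ Real.sqrt a + Real.sqrt b := by
  have h : a + b ≤ (Real.sqrt a + Real.sqrt b) ^ 2 := by
    nlinarith [Real.sq_sqrt ha, Real.sq_sqrt hb,
      mul_nonneg (Real.sqrt_nonneg a) (Real.sqrt_nonneg b)]
  calc Real.sqrt (a + b) ≤ Real.sqrt ((Real.sqrt a + Real.sqrt b) ^ 2) := Real.sqrt_le_sqrt h
    _ = Real.sqrt a + Real.sqrt b := Real.sqrt_sq (by positivity)

lemma sqrt_sum_le {ι : Type*} (s : Finset ι) (f : ι → ℝ) (hf : ∀ i ∈ s, 0 ≤ f i) :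
    Real.sqrt (∑ i ∈ s, f i) ≤ ∑ i ∈ s, Real.sqrt (f i) := by
  induction s using Finset.cons_induction with
  | empty => simp
  | cons a s ha ih =>
    rw [Finset.sum_cons, Finset.sum_cons]
    refine le_trans (sqrt_add_le' (hf a (Finset.mem_cons_self a s))
      (Finset.sum_nonneg fun i hi => hf i (Finset.mem_cons_of_mem hi))) ?_
    exact add_le_add (le_refl _) (ih fun i hi => hf i (Finset.mem_cons_of_mem hi))

variable {q : ℕ} [NeZero q] {Y : Type*} [Fintype Y]

lemma bhat_nonneg (W : ZMod q → Y → ℝ) (x x' : ZMod q) : 0 ≤ bhat W x x' :=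
  Finset.sum_nonneg fun y _ => Real.sqrt_nonneg _

lemma bhat_le_one {W : ZMod q → Y → ℝ} (hW : IsDMC W) (x x' : ZMod q) :
    bhat W x x' ≤ 1 := by
  have h : bhat W x x' ≤ ∑ y, (W x y + W x' y) / 2 := by
    apply Finset.sum_le_sum
    intro y _
    rw [Real.sqrt_mul (hW.1 x y)]
    nlinarith [Real.sq_sqrt (hW.1 x y), Real.sq_sqrt (hW.1 x' y),
      sq_nonneg (Real.sqrt (W x y) - Real.sqrt (W x' y))]
  refine h.trans ?_
  rw [← Finset.sum_div, Finset.sum_add_distrib, hW.2 x, hW.2 x']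
  norm_num

lemma Zv_nonneg (W : ZMod q → Y → ℝ) (v : ZMod q) : 0 ≤ Zv W v := by
  have hq : (0:ℝ) < q := Nat.cast_pos.mpr (NeZero.pos q)
  exact mul_nonneg (by positivity) (Finset.sum_nonneg fun x _ => bhat_nonneg W x (x + v))

lemma Zv_le_one {W : ZMod q → Y → ℝ} (hW : IsDMC W) (v : ZMod q) : Zv W v ≤ 1 := by
  have hq : (0:ℝ) < q := Nat.cast_pos.mpr (NeZero.pos q)
  have h : ∑ x : ZMod q, bhat W x (x + v) ≤ ∑ _x : ZMod q, (1:ℝ) :=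
    Finset.sum_le_sum fun x _ => bhat_le_one hW x (x + v)
  rw [Finset.sum_const, Finset.card_univ, ZMod.card, nsmul_eq_mul, mul_one] at h
  rw [Zv]
  calc (1/(q:ℝ)) * ∑ x : ZMod q, bhat W x (x + v) ≤ (1/(q:ℝ)) * q :=
    mul_le_mul_of_nonneg_left h (by positivity)
  _ = 1 := by field_simp

lemma bhat_Wminus_le {W : ZMod q → Y → ℝ} (hW : ∀ x y, 0 ≤ W x y) (u u' : ZMod q) :
    bhat (Wminus W) u u' ≤
      (1 / (q:ℝ)) * ∑ a : ZMod q, ∑ b : ZMod q, bhat W (u + a) (u' + b) * bhat W a b := by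
  have hq : (0:ℝ) < q := Nat.cast_pos.mpr (NeZero.pos q)
  have hstep : ∀ y₁ y₂ : Y,
      Real.sqrt (Wminus W u (y₁, y₂) * Wminus W u' (y₁, y₂)) ≤
      (1/(q:ℝ)) * ∑ a : ZMod q, ∑ b : ZMod q,
        Real.sqrt (W (u+a) y₁ * W (u'+b) y₁) * Real.sqrt (W a y₂ * W b y₂) := by
    intro y₁ y₂
    unfold Wminus
    dsimp only
    rw [show (1/(q:ℝ) * ∑ a : ZMod q, W (u+a) y₁ * W a y₂) *
        (1/(q:ℝ) * ∑ b : ZMod q, W (u'+b) y₁ * W b y₂)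
        = (1/(q:ℝ))^2 * ((∑ a : ZMod q, W (u+a) y₁ * W a y₂) *
          (∑ b : ZMod q, W (u'+b) y₁ * W b y₂)) from by ring,
      Real.sqrt_mul (sq_nonneg _), Real.sqrt_sq (by positivity)]
    refine mul_le_mul_of_nonneg_left ?_ (by positivity)
    rw [Finset.sum_mul_sum]
    refine (sqrt_sum_le _ _ fun a _ => Finset.sum_nonneg fun b _ =>
      mul_nonneg (mul_nonneg (hW _ _) (hW _ _)) (mul_nonneg (hW _ _) (hW _ _))).trans ?_
    refine Finset.sum_le_sum fun a _ => (sqrt_sum_le _ _ fun b _ =>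
      mul_nonneg (mul_nonneg (hW _ _) (hW _ _)) (mul_nonneg (hW _ _) (hW _ _))).trans
      (le_of_eq (Finset.sum_congr rfl fun b _ => ?_))
    rw [show (W (u+a) y₁ * W a y₂) * (W (u'+b) y₁ * W b y₂)
        = (W (u+a) y₁ * W (u'+b) y₁) * (W a y₂ * W b y₂) from by ring,
      Real.sqrt_mul (mul_nonneg (hW _ _) (hW _ _))]
  calc bhat (Wminus W) u u'
      = ∑ y₁ : Y, ∑ y₂ : Y, Real.sqrt (Wminus W u (y₁,y₂) * Wminus W u' (y₁,y₂)) := by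
        rw [bhat, Fintype.sum_prod_type]
    _ ≤ ∑ y₁ : Y, ∑ y₂ : Y, (1/(q:ℝ)) * ∑ a : ZMod q, ∑ b : ZMod q,
          Real.sqrt (W (u+a) y₁ * W (u'+b) y₁) * Real.sqrt (W a y₂ * W b y₂) :=
        Finset.sum_le_sum fun y₁ _ => Finset.sum_le_sum fun y₂ _ => hstep y₁ y₂
    _ = (1/(q:ℝ)) * ∑ y₁ : Y, ∑ y₂ : Y, ∑ a : ZMod q, ∑ b : ZMod q,
          Real.sqrt (W (u+a) y₁ * W (u'+b) y₁) * Real.sqrt (W a y₂ * W b y₂) := by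
        rw [Finset.mul_sum]
        exact Finset.sum_congr rfl fun y₁ _ => (Finset.mul_sum _ _ _).symm
    _ = (1/(q:ℝ)) * ∑ a : ZMod q, ∑ b : ZMod q, bhat W (u + a) (u' + b) * bhat W a b := by
        congr 1
        calc ∑ y₁ : Y, ∑ y₂ : Y, ∑ a : ZMod q, ∑ b : ZMod q,
              Real.sqrt (W (u+a) y₁ * W (u'+b) y₁) * Real.sqrt (W a y₂ * W b y₂)
            = ∑ y₁ : Y, ∑ a : ZMod q, ∑ b : ZMod q, ∑ y₂ : Y,
              Real.sqrt (W (u+a) y₁ * W (u'+b) y₁) * Real.sqrt (W a y₂ * W b y₂) := by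
              refine Finset.sum_congr rfl fun y₁ _ => ?_
              rw [Finset.sum_comm]
              exact Finset.sum_congr rfl fun a _ => Finset.sum_comm
          _ = ∑ a : ZMod q, ∑ b : ZMod q, ∑ y₁ : Y, ∑ y₂ : Y,
              Real.sqrt (W (u+a) y₁ * W (u'+b) y₁) * Real.sqrt (W a y₂ * W b y₂) := by
              rw [Finset.sum_comm]
              exact Finset.sum_congr rfl fun a _ => Finset.sum_comm
          _ = ∑ a : ZMod q, ∑ b : ZMod q, bhat W (u + a) (u' + b) * bhat W a b := by
              refine Finset.sum_congr rfl fun a _ => Finset.sum_congr rfl fun b _ => ?_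
              rw [bhat, bhat, Finset.sum_mul_sum]

lemma Zv_Wminus_le {W : ZMod q → Y → ℝ} (hW : ∀ x y, 0 ≤ W x y) (v : ZMod q) :
    Zv (Wminus W) v ≤ ∑ w : ZMod q, Zv W (v + w) * Zv W w := by
  have hq : (0:ℝ) < q := Nat.cast_pos.mpr (NeZero.pos q)
  have key : ∀ d : ZMod q, ∑ x : ZMod q, bhat W x (x + d) = q * Zv W d := by
    intro d; rw [Zv]; field_simp
  have hS : (∑ u : ZMod q, ∑ a : ZMod q, ∑ b : ZMod q,
      bhat W (u + a) (u + v + b) * bhat W a b)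
      = ∑ w : ZMod q, ((q:ℝ) * Zv W (v + w)) * ((q:ℝ) * Zv W w) := by
    calc ∑ u : ZMod q, ∑ a : ZMod q, ∑ b : ZMod q, bhat W (u+a) (u+v+b) * bhat W a b
        = ∑ a : ZMod q, ∑ b : ZMod q, ∑ u : ZMod q, bhat W (u+a) (u+v+b) * bhat W a b := by
          rw [Finset.sum_comm]
          exact Finset.sum_congr rfl fun a _ => Finset.sum_comm
      _ = ∑ a : ZMod q, ∑ b : ZMod q, ((q:ℝ) * Zv W (v + b - a)) * bhat W a b := by
          refine Finset.sum_congr rfl fun a _ => Finset.sum_congr rfl fun b _ => ?_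
          rw [← Finset.sum_mul, ← key (v + b - a)]
          congr 1
          refine Fintype.sum_equiv (Equiv.addRight a) _ _ fun u => ?_
          show bhat W (u+a) (u+v+b) = bhat W (u+a) ((u+a) + (v+b-a))
          rw [show u+v+b = (u+a)+(v+b-a) from by ring]
      _ = ∑ a : ZMod q, ∑ w : ZMod q, ((q:ℝ) * Zv W (v + w)) * bhat W a (a + w) := by
          refine Finset.sum_congr rfl fun a _ => ?_
          refine (Fintype.sum_equiv (Equiv.addLeft a) _ _ fun w => ?_).symm
          show ((q:ℝ) * Zv W (v + w)) * bhat W a (a + w)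
            = ((q:ℝ) * Zv W (v + (a + w) - a)) * bhat W a (a + w)
          rw [show v + (a + w) - a = v + w from by ring]
      _ = ∑ w : ZMod q, ((q:ℝ) * Zv W (v + w)) * ∑ a : ZMod q, bhat W a (a + w) := by
          rw [Finset.sum_comm]
          exact Finset.sum_congr rfl fun w _ => (Finset.mul_sum _ _ _).symm
      _ = _ := Finset.sum_congr rfl fun w _ => by rw [key w]
  calc Zv (Wminus W) v = (1/(q:ℝ)) * ∑ u : ZMod q, bhat (Wminus W) u (u + v) := rfl
    _ ≤ (1/(q:ℝ)) * ∑ u : ZMod q, ((1/(q:ℝ)) * ∑ a : ZMod q, ∑ b : ZMod q,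
          bhat W (u + a) (u + v + b) * bhat W a b) :=
        mul_le_mul_of_nonneg_left
          (Finset.sum_le_sum fun u _ => bhat_Wminus_le hW u (u+v)) (by positivity)
    _ = (1/(q:ℝ)) * ((1/(q:ℝ)) * ∑ u : ZMod q, ∑ a : ZMod q, ∑ b : ZMod q,
          bhat W (u + a) (u + v + b) * bhat W a b) := by
        rw [← Finset.mul_sum]
    _ = ∑ w : ZMod q, Zv W (v + w) * Zv W w := by
        rw [hS, Finset.mul_sum, Finset.mul_sum]
        refine Finset.sum_congr rfl fun w _ => ?_
        field_simp

lemma padic_two_val_eq_one {n : ℕ} (hn : n ≠ 0) (h2 : 2 ∣ n) (h4 : ¬ 4 ∣ n) :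
    padicValNat 2 n = 1 := by
  have hf : Fact (Nat.Prime 2) := ⟨Nat.prime_two⟩
  have h1 : 1 ≤ padicValNat 2 n :=
    (padicValNat_dvd_iff_le hn).mp (by norm_num [h2])
  have h2' : ¬ 2 ≤ padicValNat 2 n := fun h =>
    h4 (by simpa using (padicValNat_dvd_iff_le (p := 2) hn (n := 2)).mpr h)
  omega

lemma owt_of_mod4 (r : ℕ) (x : ZMod (2^r)) (hx : x.val % 4 = 2) :
    x ≠ 0 ∧ owt r x = r - 1 := by
  have hne : x.val ≠ 0 := by omega
  refine ⟨fun h => hne (by simp [h]), ?_⟩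
  rw [owt, padic_two_val_eq_one hne (by omega) (by omega)]

lemma mod4_of_owt (r : ℕ) (hr : 2 ≤ r) (x : ZMod (2^r)) (hx0 : x ≠ 0)
    (hx : owt r x = r - 1) : x.val % 4 = 2 := by
  have hf : Fact (Nat.Prime 2) := ⟨Nat.prime_two⟩
  have hne : x.val ≠ 0 := fun h => hx0 ((ZMod.val_eq_zero x).mp h)
  have hlt : x.val < 2^r := ZMod.val_lt x
  have hplt : padicValNat 2 x.val < r := by
    by_contra h
    push_neg at h
    have hdvd : 2^r ∣ x.val := dvd_trans (pow_dvd_pow 2 h) pow_padicValNat_dvd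
    have := Nat.le_of_dvd (Nat.pos_of_ne_zero hne) hdvd
    omega
  have hp1 : padicValNat 2 x.val = 1 := by rw [owt] at hx; omega
  have h2 : 2 ∣ x.val := by
    have := (padicValNat_dvd_iff_le (p := 2) hne (n := 1)).mpr (by omega)
    simpa using this
  have h4 : ¬ (4:ℕ) ∣ x.val := fun h => by
    have := (padicValNat_dvd_iff_le (p := 2) hne (n := 2)).mp (by norm_num [h])
    omega
  omega

lemma owt_of_odd (r : ℕ) (x : ZMod (2^r)) (hx : x.val % 2 = 1) :
    x ≠ 0 ∧ owt r x = r := by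
  have hne : x.val ≠ 0 := by omega
  refine ⟨fun h => hne (by simp [h]), ?_⟩
  rw [owt, padicValNat.eq_zero_of_not_dvd (by omega)]
  omega

lemma Zv_le_Zmax (r : ℕ) {Y : Type*} [Fintype Y] (W : ZMod (2^r) → Y → ℝ)
    {v : ZMod (2^r)} {j : ℕ} (hv : v ≠ 0 ∧ owt r v = j) : Zv W v ≤ Zmax r W j :=
  le_ciSup (f := fun v : {v : ZMod (2^r) // v ≠ 0 ∧ owt r v = j} => Zv W v.1)
    (Set.Finite.bddAbove (Set.finite_range _)) ⟨v, hv⟩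

lemma step_parity (r : ℕ) (hr : 1 ≤ r) (a : ZMod (2^r)) :
    (a + 1).val % 2 = (a.val + 1) % 2 := by
  have hq1 : 1 < 2^r := Nat.one_lt_two_pow (by omega)
  rw [ZMod.val_add, ZMod.val_one_eq_one_mod, Nat.mod_eq_of_lt hq1,
    Nat.mod_mod_of_dvd _ (dvd_pow_self 2 (by omega))]

lemma card_odd_filter (r : ℕ) (hr : 1 ≤ r) :
    (univ.filter fun w : ZMod (2^r) => w.val % 2 = 1).card = 2^(r-1) := by
  have hbij : (univ.filter fun w : ZMod (2^r) => w.val % 2 = 1).card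
      = (univ.filter fun w : ZMod (2^r) => ¬ w.val % 2 = 1).card := by
    apply Finset.card_bij (fun w _ => w + 1)
    · intro a ha
      simp only [Finset.mem_filter, Finset.mem_univ, true_and] at ha ⊢
      rw [step_parity r hr]
      omega
    · intro a _ b _ h
      exact add_right_cancel h
    · intro b hb
      simp only [Finset.mem_filter, Finset.mem_univ, true_and] at hb
      refine ⟨b - 1, ?_, by ring⟩
      simp only [Finset.mem_filter, Finset.mem_univ, true_and]
      have h := step_parity r hr (b - 1)
      rw [sub_add_cancel] at h
      omega
  have htot := Finset.card_filter_add_card_filter_not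
      (s := (univ : Finset (ZMod (2^r)))) (p := fun w => w.val % 2 = 1)
  rw [Finset.card_univ, ZMod.card] at htot
  have hp : 2^r = 2 * 2^(r-1) := by
    rw [← pow_succ']
    congr 1
    omega
  omega

end AuxZmax5

/-- `Z_max^{(r-1)}(W⁻) ≤ (q/2) Z_max^{(r)}(W) + (q/2) Z_max^{(r-1)}(W)`. -/
theorem Zmax_minus_second (r : ℕ) (hr : 2 ≤ r) {Y : Type*} [Fintype Y] [Nonempty Y]
    (W : ZMod (2 ^ r) → Y → ℝ) (hW : IsDMC W) :
    Zmax r (Wminus W) (r - 1) ≤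
      ((2 ^ r : ℝ) / 2) * Zmax r W r + ((2 ^ r : ℝ) / 2) * Zmax r W (r - 1) := by
  classical
  have hf : Fact (Nat.Prime 2) := ⟨Nat.prime_two⟩
  have h2lt : 2 < 2^r := by
    calc 2 = 2^1 := (pow_one 2).symm
    _ < 2^r := Nat.pow_lt_pow_right one_lt_two (by omega)
  have hv2 : ((2:ZMod (2^r))).val % 4 = 2 := by
    have h : ((2:ZMod (2^r))).val = 2 := by
      rw [show ((2:ZMod (2^r))) = ((2:ℕ) : ZMod (2^r)) from by push_cast; ring,
        ZMod.val_natCast_of_lt h2lt]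
    omega
  have hcls2 := owt_of_mod4 r _ hv2
  have hZm1 : 0 ≤ Zmax r W (r-1) := le_trans (Zv_nonneg W 2) (Zv_le_Zmax r W hcls2)
  have hne : Nonempty {v : ZMod (2^r) // v ≠ 0 ∧ owt r v = r - 1} := ⟨⟨2, hcls2⟩⟩
  have h4dvd : (4:ℕ) ∣ 2^r := by
    calc (4:ℕ) = 2^2 := by norm_num
    _ ∣ 2^r := pow_dvd_pow 2 hr
  have hpow : ((2:ℝ)^r / 2) = (2:ℝ)^(r-1) := by
    rw [div_eq_iff (by norm_num : (2:ℝ) ≠ 0), ← pow_succ]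
    congr 1
    omega
  rw [Zmax]
  apply ciSup_le
  rintro ⟨v, hv⟩
  have hv4 : v.val % 4 = 2 := mod4_of_owt r hr v hv.1 hv.2
  refine (Zv_Wminus_le hW.1 v).trans ?_
  rw [← Finset.sum_filter_add_sum_filter_not univ (fun w : ZMod (2^r) => w.val % 2 = 1)
    (fun w => Zv W (v + w) * Zv W w)]
  have hbound1 : ∑ w ∈ univ.filter (fun w : ZMod (2^r) => w.val % 2 = 1),
      Zv W (v + w) * Zv W w ≤ ((2:ℝ)^r / 2) * Zmax r W r := by
    have hterm : ∀ w ∈ univ.filter (fun w : ZMod (2^r) => w.val % 2 = 1),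
        Zv W (v + w) * Zv W w ≤ Zmax r W r := by
      intro w hw
      simp only [Finset.mem_filter, Finset.mem_univ, true_and] at hw
      have h1 : Zv W (v + w) * Zv W w ≤ 1 * Zmax r W r :=
        mul_le_mul (Zv_le_one hW _) (Zv_le_Zmax r W (owt_of_odd r w hw)) (Zv_nonneg W w) zero_le_one
      simpa using h1
    refine (Finset.sum_le_card_nsmul _ _ _ hterm).trans ?_
    rw [card_odd_filter r (by omega), nsmul_eq_mul, hpow]
    push_cast
    exact le_refl _
  have hbound2 : ∑ w ∈ univ.filter (fun w : ZMod (2^r) => ¬ w.val % 2 = 1),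
      Zv W (v + w) * Zv W w ≤ ((2:ℝ)^r / 2) * Zmax r W (r-1) := by
    have hterm : ∀ w ∈ univ.filter (fun w : ZMod (2^r) => ¬ w.val % 2 = 1),
        Zv W (v + w) * Zv W w ≤ Zmax r W (r-1) := by
      intro w hw
      simp only [Finset.mem_filter, Finset.mem_univ, true_and] at hw
      have hlt : w.val < 2^r := ZMod.val_lt w
      rcases (show w.val % 4 = 2 ∨ w.val % 4 = 0 from by omega) with h | h
      · have h1 : Zv W (v + w) * Zv W w ≤ 1 * Zmax r W (r-1) :=
          mul_le_mul (Zv_le_one hW _) (Zv_le_Zmax r W (owt_of_mod4 r w h)) (Zv_nonneg W w) zero_le_one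
        simpa using h1
      · have hvw : (v + w).val % 4 = 2 := by
          rw [ZMod.val_add, Nat.mod_mod_of_dvd _ h4dvd]
          omega
        have h1 : Zv W (v + w) * Zv W w ≤ Zmax r W (r-1) * 1 :=
          mul_le_mul (Zv_le_Zmax r W (owt_of_mod4 r _ hvw)) (Zv_le_one hW _) (Zv_nonneg W w) hZm1
        simpa using h1
    refine (Finset.sum_le_card_nsmul _ _ _ hterm).trans ?_
    have hcard : (univ.filter fun w : ZMod (2^r) => ¬ w.val % 2 = 1).card = 2^(r-1) := by
      have htot := Finset.card_filter_add_card_filter_not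
          (s := (univ : Finset (ZMod (2^r)))) (p := fun w : ZMod (2^r) => w.val % 2 = 1)
      rw [Finset.card_univ, ZMod.card, card_odd_filter r (by omega)] at htot
      have hp : 2^r = 2 * 2^(r-1) := by
        rw [← pow_succ']
        congr 1
        omega
      omega
    rw [hcard, nsmul_eq_mul, hpow]
    push_cast
    exact le_refl _
  exact add_le_add hbound1 hbound2
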